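/- Let Σ be a K×K symmetric positive-definite matrix (K ≥ 2) and suppose that for some fixed strictly positive α ∈ ℝ^K and for every q ∈ ℝ_{≥0}^K and every pair i ≠ j the cross-partial of V(q) = αᵀ(Σ⁻¹ + diag(q))⁻¹α satisfies ∂²V/∂q_i∂q_j (q) ≥ 0. Then Σ⁻¹ has non-positive off-diagonal entries. -/

import Mathlib

open Matrix

attribute [local instance] Matrix.linftyOpNormedAddCommGroup Matrix.linftyOpNormedSpace
  Matrix.linftyOpNormedRing Matrix.linftyOpNormedAlgebra

private lemma aux_mul {K : ℕ} (X Y : Matrix (Fin K) (Fin K) ℝ) (j i k : Fin K) :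
    (X * diagonal (Pi.single j 1) * Y : Matrix (Fin K) (Fin K) ℝ) i k = X i j * Y j k := by
  rw [mul_apply, Finset.sum_eq_single j]
  · simp [mul_diagonal]
  · intro a _ ha; simp [mul_diagonal, Pi.single_apply, ha]
  · simp

private lemma aux_entry {K : ℕ} (X Y : Matrix (Fin K) (Fin K) ℝ) (v : Fin K → ℝ)
    (j i : Fin K) :
    ((X * diagonal (Pi.single j 1) * Y) *ᵥ v) i = X i j * (Y *ᵥ v) j := by
  simp only [mulVec, dotProduct, aux_mul]
  rw [Finset.mul_sum]
  exact Finset.sum_congr rfl fun k _ => mul_assoc _ _ _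

private lemma aux_dot {K : ℕ} (α : Fin K → ℝ) (X Y : Matrix (Fin K) (Fin K) ℝ) (v : Fin K → ℝ)
    (j : Fin K) :
    α ⬝ᵥ ((X * diagonal (Pi.single j 1) * Y) *ᵥ v) = (Xᵀ *ᵥ α) j * (Y *ᵥ v) j := by
  simp only [dotProduct, aux_entry]
  rw [show (Xᵀ *ᵥ α) j = ∑ k, α k * X k j from by simp [mulVec, dotProduct, mul_comm],
    Finset.sum_mul]
  exact Finset.sum_congr rfl fun k _ => by ring

set_option maxHeartbeats 4000000 in
theorem stmt_10 {K : ℕ} (hK : 2 ≤ K) (S : Matrix (Fin K) (Fin K) ℝ) (hS : S.PosDef)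
    (α : Fin K → ℝ) (hα : ∀ i, 0 < α i)
    (hsub : ∀ q : Fin K → ℝ, (∀ i, 0 ≤ q i) → ∀ i j : Fin K, i ≠ j →
      0 ≤ fderiv ℝ
          (fun p : Fin K → ℝ =>
            fderiv ℝ (fun r : Fin K → ℝ => α ⬝ᵥ ((S⁻¹ + diagonal r)⁻¹ *ᵥ α)) p
              (Pi.single i 1))
          q (Pi.single j 1)) :
    ∀ i j : Fin K, i ≠ j → S⁻¹ i j ≤ 0 := by
  intro i j hij
  classical
  set A := S⁻¹ with hAdef
  have hApd : A.PosDef := hS.inv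
  have hAt : Aᵀ = A := by
    ext a b
    simpa [Matrix.conjTranspose_apply] using congrFun (congrFun hApd.isHermitian a) b
  set Mq : (Fin K → ℝ) → Matrix (Fin K) (Fin K) ℝ := fun q => A + diagonal q with hMqdef
  set g : (Fin K → ℝ) → Matrix (Fin K) (Fin K) ℝ := fun q => Ring.inverse (Mq q) with hgdef
  have hMsym : ∀ q, (Mq q)ᵀ = Mq q := fun q => by
    simp [hMqdef, transpose_add, hAt, diagonal_transpose]
  have hgsym : ∀ q, (g q)ᵀ = g q := fun q => by
    have h1 : g q = (Mq q)⁻¹ := (nonsing_inv_eq_ringInverse _).symm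
    rw [h1, transpose_nonsing_inv, hMsym]
  set U : Set (Fin K → ℝ) := {q | IsUnit (Mq q)} with hUdef
  have hdiagcont : Continuous fun q : Fin K → ℝ => (diagonal q : Matrix (Fin K) (Fin K) ℝ) :=
    (Matrix.diagonalLinearMap (Fin K) ℝ ℝ : (Fin K → ℝ) →ₗ[ℝ] _).continuous_of_finiteDimensional
  have hMcont : Continuous Mq := continuous_const.add hdiagcont
  have hUopen : IsOpen U := Units.isOpen.preimage hMcont
  set dC : (Fin K → ℝ) →L[ℝ] Matrix (Fin K) (Fin K) ℝ :=
    LinearMap.toContinuousLinearMap (Matrix.diagonalLinearMap (Fin K) ℝ ℝ) with hdCdef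
  have hdC : ∀ v, dC v = diagonal v := fun v => rfl
  have hMd : ∀ q, HasFDerivAt Mq dC q := fun q => by
    have := (dC.hasFDerivAt (x := q)).const_add A
    exact this
  set D : (Fin K → ℝ) → ((Fin K → ℝ) →L[ℝ] Matrix (Fin K) (Fin K) ℝ) := fun q =>
    ((-ContinuousLinearMap.mulLeftRight ℝ _ (g q) (g q))).comp dC with hDdef
  have hgd : ∀ q, q ∈ U → HasFDerivAt g (D q) q := by
    intro q hq
    have hgu : (↑hq.unit⁻¹ : Matrix (Fin K) (Fin K) ℝ) = g q := by
      have : g q = Ring.inverse ((hq.unit : Matrix (Fin K) (Fin K) ℝ)) := by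
        rw [hgdef, hq.unit_spec]
      rw [this, Ring.inverse_unit]
    have h1 := hasFDerivAt_ringInverse (𝕜 := ℝ) hq.unit
    rw [hq.unit_spec, hgu] at h1
    exact h1.comp q (hMd q)
  have hDval : ∀ q (k : Fin K), D q (Pi.single k 1) = -(g q * diagonal (Pi.single k 1) * g q) := by
    intro q k
    simp only [hDdef, ContinuousLinearMap.comp_apply, ContinuousLinearMap.neg_apply, hdC, ContinuousLinearMap.mulLeftRight_apply]
    rfl
  -- linear functionals
  set ℓ : Matrix (Fin K) (Fin K) ℝ →ₗ[ℝ] ℝ :=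
    { toFun := fun X => α ⬝ᵥ (X *ᵥ α)
      map_add' := fun X Y => by simp [add_mulVec, dotProduct_add]
      map_smul' := fun c X => by simp [smul_mulVec] } with hldef
  set ℓC := LinearMap.toContinuousLinearMap ℓ with hlCdef
  set ev : Fin K → (Matrix (Fin K) (Fin K) ℝ →ₗ[ℝ] ℝ) := fun k =>
    { toFun := fun X => (X *ᵥ α) k
      map_add' := fun X Y => by simp [add_mulVec]
      map_smul' := fun c X => by simp [smul_mulVec] } with hevdef
  set evC : Fin K → (Matrix (Fin K) (Fin K) ℝ →L[ℝ] ℝ) := fun k =>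
    LinearMap.toContinuousLinearMap (ev k) with hevCdef
  set Vg : (Fin K → ℝ) → ℝ := fun p => α ⬝ᵥ (g p *ᵥ α) with hVgdef
  have hVstmt : (fun r : Fin K → ℝ => α ⬝ᵥ ((S⁻¹ + diagonal r)⁻¹ *ᵥ α)) = Vg := by
    funext r
    rw [hVgdef, hgdef]
    simp only [← hAdef, ← hMqdef, nonsing_inv_eq_ringInverse]
    rfl
  have hVgd : ∀ q ∈ U, HasFDerivAt Vg (ℓC.comp (D q)) q :=
    fun q hq => (ℓC.hasFDerivAt).comp q (hgd q hq)
  have hfd1 : ∀ q ∈ U, fderiv ℝ Vg q (Pi.single i 1) = -((g q *ᵥ α) i * (g q *ᵥ α) i) := by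
    intro q hq
    rw [(hVgd q hq).fderiv]
    have h1 : (ℓC.comp (D q)) (Pi.single i 1) = ℓ (D q (Pi.single i 1)) := rfl
    rw [h1, hDval, map_neg]
    have h2 : ℓ (g q * diagonal (Pi.single i 1) * g q) = (g q *ᵥ α) i * (g q *ᵥ α) i := by
      have := aux_dot α (g q) (g q) α i
      rw [hgsym q] at this
      exact this
    rw [h2]
  set W : (Fin K → ℝ) → ℝ := fun p => -((g p *ᵥ α) i * (g p *ᵥ α) i) with hWdef
  have hWeq : ∀ q ∈ U, (fun p => fderiv ℝ Vg p (Pi.single i 1)) =ᶠ[nhds q] W := fun q hq =>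
    Filter.eventually_of_mem (hUopen.mem_nhds hq) (fun p hp => hfd1 p hp)
  have hφd : ∀ q ∈ U, HasFDerivAt (fun p => (g p *ᵥ α) i) ((evC i).comp (D q)) q :=
    fun q hq => ((evC i).hasFDerivAt).comp q (hgd q hq)
  have hDev : ∀ q, ((evC i).comp (D q)) (Pi.single j 1) = -(g q i j * (g q *ᵥ α) j) := by
    intro q
    have h1 : ((evC i).comp (D q)) (Pi.single j 1) = ev i (D q (Pi.single j 1)) := rfl
    rw [h1, hDval, map_neg]
    have h2 : ev i (g q * diagonal (Pi.single j 1) * g q) = g q i j * (g q *ᵥ α) j :=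
      aux_entry (g q) (g q) α j i
    rw [h2]
  have hsecond : ∀ q ∈ U,
      fderiv ℝ (fun p => fderiv ℝ Vg p (Pi.single i 1)) q (Pi.single j 1)
        = 2 * ((g q *ᵥ α) i * (g q i j * (g q *ᵥ α) j)) := by
    intro q hq
    have hWd : HasFDerivAt W
        (-((fun p => (g p *ᵥ α) i) q • ((evC i).comp (D q))
          + (fun p => (g p *ᵥ α) i) q • ((evC i).comp (D q)))) q :=
      ((hφd q hq).mul (hφd q hq)).neg
    rw [Filter.EventuallyEq.fderiv_eq (hWeq q hq), hWd.fderiv]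
    simp only [ContinuousLinearMap.neg_apply, ContinuousLinearMap.add_apply,
      ContinuousLinearMap.smul_apply, hDev, smul_eq_mul]
    ring
  -- positivity of units along the ray
  have hqU : ∀ t : ℝ, 0 < t → (fun _ => t : Fin K → ℝ) ∈ U := by
    intro t ht
    have : (Mq fun _ => t).PosDef :=
      hApd.add_posSemidef (posSemidef_diagonal_iff.mpr fun k => ht.le)
    exact this.isUnit
  have key : ∀ t : ℝ, 0 < t →
      0 ≤ (g (fun _ => t) *ᵥ α) i * (g (fun _ => t) i j * (g (fun _ => t) *ᵥ α) j) := by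
    intro t ht
    have h := hsub (fun _ => t) (fun k => ht.le) i j hij
    rw [hVstmt, hsecond _ (hqU t ht)] at h
    linarith
  -- the rescaled inverse
  set c : ℝ → Matrix (Fin K) (Fin K) ℝ := fun u => Ring.inverse (1 + u • A) with hcdef
  have hherm : ∀ (X : Matrix (Fin K) (Fin K) ℝ), Xᵀ = X → X.IsHermitian := by
    intro X hX
    ext a b
    simpa [Matrix.conjTranspose_apply] using (congrFun (congrFun hX b) a).symm
  have hcu : ∀ u : ℝ, 0 ≤ u → IsUnit (1 + u • A : Matrix (Fin K) (Fin K) ℝ) := by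
    intro u hu
    have hsm : (u • A : Matrix (Fin K) (Fin K) ℝ).PosSemidef := by
      refine ⟨hherm _ ?_, fun x => ?_⟩
      · rw [transpose_smul, hAt]
      · have h0 := smul_nonneg hu (hApd.posSemidef.2 x)
        convert h0 using 1
        simp only [Finsupp.sum, smul_eq_mul, Finset.mul_sum, Matrix.smul_apply, star_trivial]
        refine Finset.sum_congr rfl fun a _ => Finset.sum_congr rfl fun b _ => ?_
        ring
    have h1 : (1 + u • A : Matrix (Fin K) (Fin K) ℝ).PosDef :=
      Matrix.PosDef.add_posSemidef Matrix.PosDef.one hsm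
    exact h1.isUnit
  have hgc : ∀ t : ℝ, 0 < t → g (fun _ => t) = t⁻¹ • c t⁻¹ := by
    intro t ht
    have hdiag : (diagonal (fun _ => t) : Matrix (Fin K) (Fin K) ℝ) = t • 1 := by
      ext a b
      by_cases h : a = b <;> simp [diagonal_apply, h, Matrix.one_apply]
    have hM : Mq (fun _ => t) = t • (1 + t⁻¹ • A) := by
      rw [hMqdef]
      simp only [hdiag, smul_add, smul_smul, mul_inv_cancel₀ ht.ne', one_smul]
      abel
    have hrinv : (1 + t⁻¹ • A : Matrix (Fin K) (Fin K) ℝ) * c t⁻¹ = 1 :=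
      Ring.mul_inverse_cancel _ (hcu _ (by positivity))
    have hone : Mq (fun _ => t) * (t⁻¹ • c t⁻¹) = 1 := by
      rw [hM, smul_mul_assoc, mul_smul_comm, smul_smul, mul_inv_cancel₀ ht.ne', one_smul, hrinv]
    have h2 : (Mq (fun _ => t))⁻¹ = t⁻¹ • c t⁻¹ := inv_eq_right_inv hone
    rw [hgdef]
    simp only [← nonsing_inv_eq_ringInverse, h2]
  have key2 : ∀ u : ℝ, 0 < u → 0 ≤ (c u *ᵥ α) i * (c u i j * (c u *ᵥ α) j) := by
    intro u hu
    have h := key u⁻¹ (by positivity)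
    rw [hgc _ (by positivity), inv_inv] at h
    have hexp : ((u • c u) *ᵥ α) i * ((u • c u) i j * ((u • c u) *ᵥ α) j)
        = u ^ 3 * ((c u *ᵥ α) i * (c u i j * (c u *ᵥ α) j)) := by
      simp only [smul_mulVec, Pi.smul_apply, Matrix.smul_apply, smul_eq_mul]
      ring
    rw [hexp] at h
    nlinarith [pow_pos hu 3]
  have hentry : ∀ u : ℝ, 0 < u → c u i j = -(u * ((c u * A : Matrix (Fin K) (Fin K) ℝ) i j)) := by
    intro u hu
    have h1 : c u * (1 + u • A) = 1 := Ring.inverse_mul_cancel _ (hcu u hu.le)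
    have h2 : c u + u • (c u * A : Matrix (Fin K) (Fin K) ℝ) = 1 := by
      rw [← h1, mul_add, mul_one, mul_smul_comm]
    have h3 := congrFun (congrFun h2 i) j
    simp only [Matrix.add_apply, Matrix.smul_apply, smul_eq_mul,
      Matrix.one_apply_ne hij] at h3
    linarith
  have hGdef : True := trivial
  have key3 : ∀ u : ℝ, 0 < u →
      0 ≤ (c u *ᵥ α) i * (-((c u * A : Matrix (Fin K) (Fin K) ℝ) i j)) * (c u *ᵥ α) j := by
    intro u hu
    have h := key2 u hu
    rw [hentry u hu] at h
    have heq : (c u *ᵥ α) i * (-(u * (c u * A : Matrix (Fin K) (Fin K) ℝ) i j) * (c u *ᵥ α) j)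
        = u * ((c u *ᵥ α) i * (-((c u * A : Matrix (Fin K) (Fin K) ℝ) i j)) * (c u *ᵥ α) j) := by
      ring
    rw [heq] at h
    nlinarith
  -- continuity and limit
  have hccont : ContinuousAt c 0 := by
    have h1 : Continuous fun u : ℝ => (1 + u • A : Matrix (Fin K) (Fin K) ℝ) :=
      continuous_const.add (continuous_id.smul continuous_const)
    have h2 : ContinuousAt Ring.inverse ((1 : Matrix (Fin K) (Fin K) ℝ)) := by
      have := NormedRing.inverse_continuousAt (1 : (Matrix (Fin K) (Fin K) ℝ)ˣ)
      rw [Units.val_one] at this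
      exact this
    have h3 : ContinuousAt Ring.inverse ((fun u : ℝ => (1 + u • A : Matrix (Fin K) (Fin K) ℝ)) 0) := by
      simpa using h2
    have h4 : ContinuousAt (Ring.inverse ∘ fun u : ℝ => (1 + u • A : Matrix (Fin K) (Fin K) ℝ)) 0 :=
      ContinuousAt.comp (g := Ring.inverse)
        (f := fun u : ℝ => (1 + u • A : Matrix (Fin K) (Fin K) ℝ)) (x := (0 : ℝ))
        h3 h1.continuousAt
    exact h4
  have hFcont : Continuous fun X : Matrix (Fin K) (Fin K) ℝ =>
      (X *ᵥ α) i * (-((X * A : Matrix (Fin K) (Fin K) ℝ) i j)) * (X *ᵥ α) j := by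
    have e1 : Continuous fun X : Matrix (Fin K) (Fin K) ℝ => (X *ᵥ α) i :=
      (ev i).continuous_of_finiteDimensional
    have e3 : Continuous fun X : Matrix (Fin K) (Fin K) ℝ => (X *ᵥ α) j :=
      (ev j).continuous_of_finiteDimensional
    have e2 : Continuous fun X : Matrix (Fin K) (Fin K) ℝ => (X * A : Matrix (Fin K) (Fin K) ℝ) i j := by
      have : Continuous fun X : Matrix (Fin K) (Fin K) ℝ => X * A :=
        (LinearMap.toContinuousLinearMap
          { toFun := fun X : Matrix (Fin K) (Fin K) ℝ => X * A
            map_add' := fun X Y => add_mul X Y A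
            map_smul' := fun r X => smul_mul_assoc r X A } : _ →L[ℝ] _).continuous
      exact ((continuous_apply j).comp ((continuous_apply i).comp this))
    exact (e1.mul e2.neg).mul e3
  have hGtend : Filter.Tendsto
      (fun u => (c u *ᵥ α) i * (-((c u * A : Matrix (Fin K) (Fin K) ℝ) i j)) * (c u *ᵥ α) j)
      (nhdsWithin 0 (Set.Ioi 0)) (nhds (α i * (-(A i j)) * α j)) := by
    have h1 : ContinuousAt
        (fun u => (c u *ᵥ α) i * (-((c u * A : Matrix (Fin K) (Fin K) ℝ) i j)) * (c u *ᵥ α) j)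
        0 := by
      have h5 : ContinuousAt ((fun X : Matrix (Fin K) (Fin K) ℝ =>
          (X *ᵥ α) i * (-((X * A : Matrix (Fin K) (Fin K) ℝ) i j)) * (X *ᵥ α) j) ∘ c) 0 :=
        hFcont.continuousAt.comp hccont
      exact h5
    have h4 : (c 0 *ᵥ α) i * (-((c 0 * A : Matrix (Fin K) (Fin K) ℝ) i j)) * (c 0 *ᵥ α) j
        = α i * (-(A i j)) * α j := by
      have hc0 : c 0 = 1 := by rw [hcdef]; simp [Ring.inverse_one]
      rw [hc0]
      simp [Matrix.one_mulVec, Matrix.one_mul]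
    rw [← h4]
    exact h1.continuousWithinAt.tendsto
  have hfinal : 0 ≤ α i * (-(A i j)) * α j := by
    refine ge_of_tendsto hGtend ?_
    filter_upwards [self_mem_nhdsWithin] with u hu
    exact key3 u hu
  nlinarith [hα i, hα j, mul_pos (hα i) (hα j)]
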